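/- Consider a finite-state Markov chain with absorbing goal state g, a stationary deterministic policy π̄, true transition kernel P, estimated kernel P̃', true cost c and estimated cost ĉ (with c(g,·)=ĉ(g,·)=0), and a nonnegative bonus b. Suppose π̄ is proper under P (finite expected hitting time of g from every state) so V^{π̄} is finite and satisfies the Bellman equation V^{π̄}(s) = c(s,π̄(s)) + P_{s,π̄(s)}V^{π̄}. Suppose V̄ : S' → ℝ with V̄(g)=0 satisfies V̄(s) = ĉ(s,π̄(s)) + P̃'_{s,π̄(s)}V̄ + b(s,π̄(s)) for all s ≠ g, and that ‖V̄‖_∞ < ∞. Then for any initial state distribution, V^{π̄} − V̄ = Σ_{h=0}^∞ Σ_{s≠g} ξ_h^{π̄}(s)·[(P_{s,π̄(s)} − P̃'_{s,π̄(s)})V̄ + c(s,π̄(s)) − ĉ(s,π̄(s)) − b(s,π̄(s))], where ξ_h^{π̄}(s) is the probability of being at state s at step h under π̄ and P. -/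

import Mathlib

open Finset

/-- Simulation-lemma style exact value decomposition for SSP: for a proper stationary
deterministic policy `π̄` with value `V^{π̄}` and a bounded `V̄` solving the empirical
(bonus-augmented) Bellman equation,
`V^{π̄} - V̄ = Σ_h Σ_{s≠g} ξ_h(s) [(P - P̃')V̄ + c - ĉ - b](s, π̄(s))`. -/
theorem stmt_17 {S A : Type*} [Fintype S] [DecidableEq S]
    (g : S) (πb : S → A)
    (P Ptil : S → A → S → ℝ) (c chat b : S → A → ℝ)
    (hP0 : ∀ s a s', 0 ≤ P s a s') (hP1 : ∀ s a, ∑ s', P s a s' = 1)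
    (habs : ∀ (a : A) (s' : S), P g a s' = if s' = g then (1 : ℝ) else 0)
    (hcg : ∀ a, c g a = 0) (hchatg : ∀ a, chat g a = 0)
    (hb0 : ∀ s a, 0 ≤ b s a)
    (Vpi Vbar : S → ℝ) (hVpig : Vpi g = 0) (hVbarg : Vbar g = 0)
    (hBell : ∀ s, s ≠ g → Vpi s = c s (πb s) + ∑ s', P s (πb s) s' * Vpi s')
    (hVbar : ∀ s, s ≠ g →
      Vbar s = chat s (πb s) + (∑ s', Ptil s (πb s) s' * Vbar s') + b s (πb s))
    (ξ0 : S → ℝ) (hξ00 : ∀ s, 0 ≤ ξ0 s) (hξ01 : ∑ s, ξ0 s = 1)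
    (ξ : ℕ → S → ℝ) (hξinit : ξ 0 = ξ0)
    (hξrec : ∀ h s', ξ (h + 1) s' = ∑ s, ξ h s * P s (πb s) s')
    -- properness of `π̄`: the expected hitting time of `g` is finite
    (hproper : Summable (fun h : ℕ =>
      ∑ s ∈ Finset.univ.filter (fun s : S => s ≠ g), ξ h s)) :
    (∑ s, ξ0 s * (Vpi s - Vbar s))
      = ∑' h : ℕ, ∑ s ∈ Finset.univ.filter (fun s : S => s ≠ g), ξ h s *
          (((∑ s', P s (πb s) s' * Vbar s') - ∑ s', Ptil s (πb s) s' * Vbar s')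
            + c s (πb s) - chat s (πb s) - b s (πb s)) := by
  classical
  set D : S → ℝ := fun s => Vpi s - Vbar s with hD
  set err : S → ℝ := fun s =>
    ((∑ s', P s (πb s) s' * Vbar s') - ∑ s', Ptil s (πb s) s' * Vbar s')
      + c s (πb s) - chat s (πb s) - b s (πb s) with herr
  set f : ℕ → ℝ := fun h =>
    ∑ s ∈ Finset.univ.filter (fun s : S => s ≠ g), ξ h s * err s with hf
  set Aa : ℕ → ℝ := fun h => ∑ s, ξ h s * D s with hAa
  have hDg : D g = 0 := by simp [hD, hVpig, hVbarg]
  have hsplit : ∀ s, (∑ s', P s (πb s) s' * D s')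
      = (∑ s', P s (πb s) s' * Vpi s') - ∑ s', P s (πb s) s' * Vbar s' := by
    intro s
    rw [← Finset.sum_sub_distrib]
    refine Finset.sum_congr rfl fun s' _ => ?_
    simp only [hD]; ring
  have hDstep : ∀ s, s ≠ g → D s = err s + ∑ s', P s (πb s) s' * D s' := by
    intro s hs
    rw [hsplit s]
    simp only [hD, herr]
    rw [hBell s hs, hVbar s hs]
    ring
  -- A over filter
  have hAfilter : ∀ (w : S → ℝ), (∑ s, ξ0 s * 0) = 0 := by intro w; simp
  have hAeq : ∀ h, Aa h = ∑ s ∈ Finset.univ.filter (fun s : S => s ≠ g), ξ h s * D s := by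
    intro h
    show (∑ s, ξ h s * D s) = _
    rw [← Finset.sum_filter_add_sum_filter_not Finset.univ (fun s : S => s ≠ g)]
    have hz : ∑ s ∈ Finset.univ.filter (fun s : S => ¬ s ≠ g), ξ h s * D s = 0 := by
      refine Finset.sum_eq_zero fun s hsmem => ?_
      have : s = g := by simpa using hsmem
      simp [this, hDg]
    rw [hz, add_zero]
  have hstep : ∀ h, Aa h = f h + Aa (h + 1) := by
    intro h
    have hA1 : Aa (h + 1) = ∑ s, ξ h s * ∑ s', P s (πb s) s' * D s' := by
      show (∑ s', ξ (h + 1) s' * D s') = _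
      rw [show (∑ s', ξ (h + 1) s' * D s')
          = ∑ s', (∑ s, ξ h s * P s (πb s) s') * D s' from
        Finset.sum_congr rfl fun s' _ => by rw [hξrec]]
      simp only [Finset.sum_mul]
      rw [Finset.sum_comm]
      refine Finset.sum_congr rfl fun s _ => ?_
      rw [Finset.mul_sum]
      refine Finset.sum_congr rfl fun s' _ => ?_
      ring
    have hA1' : Aa (h + 1)
        = ∑ s ∈ Finset.univ.filter (fun s : S => s ≠ g),
            ξ h s * ∑ s', P s (πb s) s' * D s' := by
      rw [hA1, ← Finset.sum_filter_add_sum_filter_not Finset.univ (fun s : S => s ≠ g)]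
      have : ∑ s ∈ Finset.univ.filter (fun s : S => ¬ s ≠ g),
          ξ h s * ∑ s', P s (πb s) s' * D s' = 0 := by
        refine Finset.sum_eq_zero fun s hsmem => ?_
        have hs : s = g := by simpa using hsmem
        subst hs
        have : (∑ s', P s (πb s) s' * D s') = D s := by
          rw [Finset.sum_eq_single s]
          · simp [habs]
          · intro s' _ hne; simp [habs, hne]
          · intro hmem; exact absurd (Finset.mem_univ s) hmem
        simp [this, hDg]
      rw [this, add_zero]
    rw [hAeq h, hA1', hf]
    rw [← Finset.sum_add_distrib]
    refine Finset.sum_congr rfl fun s hsmem => ?_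
    have hs : s ≠ g := by simpa using hsmem
    rw [hDstep s hs]; ring
  have hpartial : ∀ N, (∑ h ∈ Finset.range N, f h) = Aa 0 - Aa N := by
    intro N
    induction N with
    | zero => simp
    | succ n ih =>
      rw [Finset.sum_range_succ, ih]
      have := hstep n
      linarith
  -- nonnegativity of ξ
  have hξnn : ∀ h s, 0 ≤ ξ h s := by
    intro h
    induction h with
    | zero => intro s; rw [hξinit]; exact hξ00 s
    | succ n ih =>
      intro s'
      rw [hξrec]
      exact Finset.sum_nonneg fun s _ => mul_nonneg (ih s) (hP0 s (πb s) s')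
  set G : ℕ → ℝ := fun h => ∑ s ∈ Finset.univ.filter (fun s : S => s ≠ g), ξ h s with hG
  have hGnn : ∀ h, 0 ≤ G h := fun h => Finset.sum_nonneg fun s _ => hξnn h s
  -- bound |A N|
  set M : ℝ := ∑ s, |D s| with hM
  have hMb : ∀ s, |D s| ≤ M :=
    fun s => Finset.single_le_sum (fun s _ => abs_nonneg (D s)) (Finset.mem_univ s)
  have hAbd : ∀ N, |Aa N| ≤ G N * M := by
    intro N
    rw [hAeq N]
    calc |∑ s ∈ Finset.univ.filter (fun s : S => s ≠ g), ξ N s * D s|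
        ≤ ∑ s ∈ Finset.univ.filter (fun s : S => s ≠ g), |ξ N s * D s| :=
          Finset.abs_sum_le_sum_abs _ _
      _ ≤ ∑ s ∈ Finset.univ.filter (fun s : S => s ≠ g), ξ N s * M := by
          refine Finset.sum_le_sum fun s _ => ?_
          rw [abs_mul, abs_of_nonneg (hξnn N s)]
          exact mul_le_mul_of_nonneg_left (hMb s) (hξnn N s)
      _ = G N * M := by rw [hG, Finset.sum_mul]
  have hGto0 : Filter.Tendsto G Filter.atTop (nhds 0) := hproper.tendsto_atTop_zero
  have hAto0 : Filter.Tendsto Aa Filter.atTop (nhds 0) := by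
    refine squeeze_zero_norm (a := fun N => G N * M) (fun n => ?_) ?_
    · simpa using hAbd n
    · simpa using hGto0.mul_const M
  -- summability of f
  set C : ℝ := ∑ s, |err s| with hC
  have hCb : ∀ s, |err s| ≤ C :=
    fun s => Finset.single_le_sum (fun s _ => abs_nonneg (err s)) (Finset.mem_univ s)
  have hfsum : Summable f := by
    refine Summable.of_norm_bounded (g := fun h => G h * C) (hproper.mul_right C) fun h => ?_
    rw [hf]
    calc ‖∑ s ∈ Finset.univ.filter (fun s : S => s ≠ g), ξ h s * err s‖
        ≤ ∑ s ∈ Finset.univ.filter (fun s : S => s ≠ g), |ξ h s * err s| :=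
          Finset.abs_sum_le_sum_abs _ _
      _ ≤ ∑ s ∈ Finset.univ.filter (fun s : S => s ≠ g), ξ h s * C := by
          refine Finset.sum_le_sum fun s _ => ?_
          rw [abs_mul, abs_of_nonneg (hξnn h s)]
          exact mul_le_mul_of_nonneg_left (hCb s) (hξnn h s)
      _ = G h * C := by rw [hG, Finset.sum_mul]
  have h1 : Filter.Tendsto (fun N => ∑ h ∈ Finset.range N, f h) Filter.atTop
      (nhds (∑' h, f h)) := hfsum.hasSum.tendsto_sum_nat
  have h2 : Filter.Tendsto (fun N => ∑ h ∈ Finset.range N, f h) Filter.atTop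
      (nhds (Aa 0)) := by
    have : Filter.Tendsto (fun N => Aa 0 - Aa N) Filter.atTop (nhds (Aa 0 - 0)) :=
      (tendsto_const_nhds.sub hAto0)
    simp only [sub_zero] at this
    exact this.congr fun N => (hpartial N).symm
  have htsum : (∑' h, f h) = Aa 0 := tendsto_nhds_unique h1 h2
  have : Aa 0 = ∑ s, ξ0 s * (Vpi s - Vbar s) := by
    simp [hAa, hξinit, hD]
  rw [← this, ← htsum]
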